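/- Let P be a root pairing over ℤ between free ℤ-modules M (weights) and N (coweights), with Weyl group W acting on N by the coreflections s_α(λ) = λ − ⟨α, λ⟩·α∨. Then the subgroup of N generated by {λ − w·λ : λ ∈ N, w ∈ W} equals the subgroup of N generated by {⟨α, λ⟩·α∨ : α a root, λ ∈ N}. -/

import Mathlib

/-- For a root pairing over `ℤ` between free `ℤ`-modules, with the Weyl group `W` acting
on the coweight lattice `N` by the coreflections, the subgroup of `N` generated by
`{λ − w·λ : λ ∈ N, w ∈ W}` equals the subgroup generated by
`{⟨α, λ⟩·α∨ : α a root, λ ∈ N}`. -/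
theorem stmt_12 {ι M N : Type*} [AddCommGroup M] [Module ℤ M] [AddCommGroup N] [Module ℤ N]
    [Module.Free ℤ M] [Module.Free ℤ N] (P : RootPairing ι ℤ M N) :
    AddSubgroup.closure {x : N | ∃ (lam : N) (w : N ≃ₗ[ℤ] N),
        w ∈ Subgroup.closure (Set.range fun i : ι => P.coreflection i) ∧ x = lam - w lam} =
      AddSubgroup.closure {x : N | ∃ (i : ι) (lam : N),
        x = P.toLinearMap (P.root i) lam • P.coroot i} := by
  have key : ∀ i (lam : N), lam - P.coreflection i lam
      = P.toLinearMap (P.root i) lam • P.coroot i := by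
    intro i lam
    simp [RootPairing.coreflection_apply, RootPairing.root']
    exact int_smul_eq_zsmul _ _ _

  apply le_antisymm
  · rw [AddSubgroup.closure_le]
    rintro x ⟨lam, w, hw, rfl⟩
    revert lam
    induction hw using Subgroup.closure_induction'' with
    | one => intro lam; simp [AddSubgroup.zero_mem]
    | mul w₁ w₂ _ _ h1 h2 =>
        intro lam
        have : lam - (w₁ * w₂) lam = (lam - w₂ lam) + (w₂ lam - w₁ (w₂ lam)) := by
          simp
        rw [this]
        exact AddSubgroup.add_mem _ (h2 lam) (h1 (w₂ lam))
    | mem w hw =>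
        intro lam
        obtain ⟨i, rfl⟩ := hw
        rw [key]
        exact AddSubgroup.subset_closure ⟨i, lam, rfl⟩
    | inv_mem w hw =>
        intro lam
        obtain ⟨i, rfl⟩ := hw
        have : lam - (P.coreflection i)⁻¹ lam
            = -(((P.coreflection i)⁻¹ lam) - P.coreflection i ((P.coreflection i)⁻¹ lam)) := by
          simp
        rw [this, key]
        exact AddSubgroup.neg_mem _ (AddSubgroup.subset_closure ⟨i, _, rfl⟩)
  · rw [AddSubgroup.closure_le]
    rintro x ⟨i, lam, rfl⟩
    exact AddSubgroup.subset_closure ⟨lam, P.coreflection i,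
      Subgroup.subset_closure ⟨i, rfl⟩, (key i lam).symm⟩
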